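/- There do not exist positive integers p and n such that p⁵ = 8n² + 4n + 1. -/

import Mathlib

open Zsqrtd

abbrev GI := GaussianInt

lemma pow5_re (c : GI) : (c^5).re = c.re^5 - 10*c.re^3*c.im^2 + 5*c.re*c.im^4 := by
  have h : c^5 = c*c*c*c*c := by ring
  rw [h]; simp [Zsqrtd.re_mul, Zsqrtd.im_mul]; ring

lemma pow5_im (c : GI) : (c^5).im = 5*c.re^4*c.im - 10*c.re^2*c.im^3 + c.im^5 := by
  have h : c^5 = c*c*c*c*c := by ring
  rw [h]; simp [Zsqrtd.re_mul, Zsqrtd.im_mul]; ring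

noncomputable instance : GCDMonoid GI := EuclideanDomain.gcdMonoid _

lemma unit_pow4 (u : GI) (hu : IsUnit u) : u^4 = 1 := by
  obtain ⟨r, i⟩ := u
  have hn : Zsqrtd.norm (⟨r, i⟩ : GI) = 1 := by
    have h1 := Zsqrtd.norm_eq_one_iff.mpr hu
    have h2 := Zsqrtd.norm_nonneg (by norm_num : (-1:ℤ) ≤ 0) (⟨r,i⟩ : GI)
    omega
  have hn' : r * r + i * i = 1 := by simpa [Zsqrtd.norm_def] using hn
  have hr1 : r ≤ 1 := by nlinarith
  have hr2 : -1 ≤ r := by nlinarith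
  have hi1 : i ≤ 1 := by nlinarith
  have hi2 : -1 ≤ i := by nlinarith
  have h4 : (⟨r,i⟩ : GI)^4 = (⟨r,i⟩ : GI)*⟨r,i⟩*⟨r,i⟩*⟨r,i⟩ := by ring
  show (⟨r,i⟩ : GI)^4 = 1
  interval_cases r <;> interval_cases i <;>
    first
      | (exfalso; omega)
      | (rw [h4]; ext <;> simp [Zsqrtd.re_mul, Zsqrtd.im_mul])

/-- there are no positive integers `p`, `n` with `p^5 = 8n² + 4n + 1`. -/
theorem stmt16 : ¬ ∃ p n : ℕ, 0 < p ∧ 0 < n ∧ p ^ 5 = 8 * n ^ 2 + 4 * n + 1 := by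
  rintro ⟨p, n, hp, hn, h⟩
  set m : ℤ := 2 * (n : ℤ) with hm
  have hP : ((p:ℤ))^5 = (m+1)^2 + m^2 := by
    have : ((p:ℤ))^5 = 8*(n:ℤ)^2 + 4*n + 1 := by exact_mod_cast h
    rw [this, hm]; ring
  have hodd5 : p^5 % 2 = 1 := by omega
  set α : GI := ⟨m+1, m⟩ with hα
  set β : GI := ⟨m+1, -m⟩ with hβ
  have hprod : α * β = (((p:ℤ) : GI))^5 := by
    have h1 : α * β = ((((m+1)^2 + m^2 : ℤ)) : GI) := by
      ext
      · simp only [hα, hβ, Zsqrtd.re_mul, Zsqrtd.re_intCast]; ring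
      · simp only [hα, hβ, Zsqrtd.im_mul, Zsqrtd.im_intCast]; ring
    rw [h1, ← hP]
    push_cast
    ring
  -- gcd of α β is a unit
  have hgα : gcd α β ∣ α := gcd_dvd_left _ _
  have hgβ : gcd α β ∣ β := gcd_dvd_right _ _
  have hd2 : gcd α β ∣ (⟨2, 0⟩ : GI) := by
    have h1 : gcd α β ∣ α + β := dvd_add hgα hgβ
    have h2 : gcd α β ∣ (α - β) * ⟨0, -1⟩ := Dvd.dvd.mul_right (dvd_sub hgα hgβ) _
    have e1 : α + β = (⟨2*(m+1), 0⟩ : GI) := by ext <;> simp [hα, hβ] <;> ring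
    have e2 : (α - β) * ⟨0, -1⟩ = (⟨2*m, 0⟩ : GI) := by
      ext <;> simp [hα, hβ, Zsqrtd.re_mul, Zsqrtd.im_mul] <;> ring
    have : gcd α β ∣ (⟨2*(m+1), 0⟩ : GI) - ⟨2*m, 0⟩ := by
      rw [← e1, ← e2]; exact dvd_sub h1 h2
    convert this using 1
    ext <;> simp <;> ring
  have hN4 : (Zsqrtd.norm (gcd α β)).natAbs ∣ 4 := by
    obtain ⟨c, hc⟩ := hd2
    have : Zsqrtd.norm (gcd α β) ∣ 4 := by
      refine ⟨Zsqrtd.norm c, ?_⟩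
      have := congrArg Zsqrtd.norm hc
      rw [Zsqrtd.norm_mul] at this
      rw [← this]
      simp [Zsqrtd.norm_def]
    exact Int.natAbs_dvd_natAbs.mpr (by simpa using this)
  have hNp : (Zsqrtd.norm (gcd α β)).natAbs ∣ p^5 := by
    obtain ⟨c, hc⟩ := hgα
    have : Zsqrtd.norm (gcd α β) ∣ ((p:ℤ))^5 := by
      refine ⟨Zsqrtd.norm c, ?_⟩
      have hcn := congrArg Zsqrtd.norm hc
      rw [Zsqrtd.norm_mul] at hcn
      rw [← hcn, hP]
      simp [hα, Zsqrtd.norm_def]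
      ring
    have h2 := Int.natAbs_dvd_natAbs.mpr this
    rwa [Int.natAbs_pow, Int.natAbs_natCast] at h2
  have hgu : IsUnit (gcd α β) := by
    rw [← Zsqrtd.norm_eq_one_iff]
    set N := (Zsqrtd.norm (gcd α β)).natAbs with hNdef
    have hle : N ≤ 4 := Nat.le_of_dvd (by norm_num) hN4
    have hNpos : 0 < N := Nat.pos_of_dvd_of_pos hN4 (by norm_num)
    interval_cases N <;> first
      | rfl
      | (exfalso; obtain ⟨k, hk⟩ := hNp <;> omega)
      | (exfalso; revert hN4; decide)
  obtain ⟨d, hd⟩ := exists_associated_pow_of_mul_eq_pow hgu hprod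
  obtain ⟨u, hu⟩ := hd
  have hu4 : ((u : GI))^4 = 1 := unit_pow4 _ u.isUnit
  set c : GI := d * u with hcdef
  have hc5 : c^5 = α := by
    have : c^5 = d^5 * (u:GI) * ((u:GI))^4 := by rw [hcdef]; ring
    rw [this, hu4, mul_one, hu]
  have e1 : c.re^5 - 10*c.re^3*c.im^2 + 5*c.re*c.im^4 = m + 1 := by
    have := pow5_re c; rw [hc5] at this; simpa [hα] using this.symm
  have e2 : 5*c.re^4*c.im - 10*c.re^2*c.im^3 + c.im^5 = m := by
    have := pow5_im c; rw [hc5] at this; simpa [hα] using this.symm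
  set a := c.re
  set b := c.im
  have key : (a - b) * ((a-b)^4 - 20*a^2*b^2) = 1 := by linear_combination e1 - e2
  have hab : a - b = 1 ∨ a - b = -1 := Int.isUnit_iff.mp (IsUnit.of_mul_eq_one _ key)
  rcases hab with hab | hab
  · have hz : a^2 * b^2 = 0 := by
      rw [hab] at key; nlinarith [key]
    rcases mul_eq_zero.mp hz with hz | hz
    · have ha0 : a = 0 := pow_eq_zero_iff (by norm_num) |>.mp hz
      have hb : b = -1 := by omega
      rw [ha0, hb] at e2
      norm_num at e2
      omega
    · have hb0 : b = 0 := pow_eq_zero_iff (by norm_num) |>.mp hz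
      have ha : a = 1 := by omega
      rw [ha, hb0] at e2
      norm_num at e2
      omega
  · have hk : 20 * (a*b)^2 = 2 := by
      rw [hab] at key; ring_nf at key ⊢; linarith
    rcases eq_or_lt_of_le (sq_nonneg (a*b)) with h0 | h0
    · rw [← h0] at hk; norm_num at hk
    · have : 1 ≤ (a*b)^2 := h0
      linarith
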